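/- For any graph H on n vertices, χ_{K_3}(H) + χ_{K_3}(complement of H) ≤ ⌈n/2⌉ + 1. -/
import Mathlib


open SimpleGraph

/-- `H` contains a copy of `G`: an injective map preserving adjacency. -/
def ContainsCopy {α β : Type*} (G : SimpleGraph α) (H : SimpleGraph β) : Prop :=
  ∃ f : α ↪ β, ∀ a b, G.Adj a b → H.Adj (f a) (f b)

/-- `H` is `G`-free. -/
def GFree {α β : Type*} (G : SimpleGraph α) (H : SimpleGraph β) : Prop :=
  ¬ ContainsCopy G H

/-- The `G`-free chromatic number of `H`. -/
noncomputable def gChrom {α β : Type*} (G : SimpleGraph α) (H : SimpleGraph β) : ℕ :=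
  sInf {k | ∃ c : β → Fin k, ∀ i, GFree G (H.induce {v | c v = i})}

/-- `H` is `G`-free `k`-critical. -/
def GFreeCritical {α β : Type*} (G : SimpleGraph α) (H : SimpleGraph β) (k : ℕ) : Prop :=
  gChrom G H = k ∧ ∀ F : H.Subgraph, F ≠ ⊤ → gChrom G F.coe ≤ k - 1

section AuxTF
variable {β : Type*}

/-- A triangle in an induced subgraph is just a triangle inside the set. -/
lemma gfree_iff (H : SimpleGraph β) (A : Set β) :
    GFree (completeGraph (Fin 3)) (H.induce A) ↔
      ∀ x y z, x ∈ A → y ∈ A → z ∈ A → H.Adj x y → H.Adj x z → H.Adj y z → False := by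
  constructor
  · intro hfree x y z hx hy hz axy axz ayz
    apply hfree
    have hxy := axy.ne; have hxz := axz.ne; have hyz := ayz.ne
    refine ⟨⟨![⟨x, hx⟩, ⟨y, hy⟩, ⟨z, hz⟩], ?_⟩, ?_⟩
    · intro i j hij
      fin_cases i <;> fin_cases j <;> simp_all [Subtype.ext_iff]
    · intro i j hij
      have hne : i ≠ j := by
        intro h; subst h; exact (completeGraph (Fin 3)).irrefl hij
      fin_cases i <;> fin_cases j <;>
        simp_all [SimpleGraph.comap_adj] <;>
        first | exact axy | exact axz | exact ayz | exact axy.symm | exact axz.symm | exact ayz.symm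
  · rintro h ⟨f, hf⟩
    have a01 : (H.induce A).Adj (f 0) (f 1) := hf 0 1 (by simp [completeGraph])
    have a02 : (H.induce A).Adj (f 0) (f 2) := hf 0 2 (by simp [completeGraph])
    have a12 : (H.induce A).Adj (f 1) (f 2) := hf 1 2 (by simp [completeGraph])
    exact h (f 0) (f 1) (f 2) (f 0).2 (f 1).2 (f 2).2 a01 a02 a12

/-- Triangle-free colorings of the vertices of `s` with `k` colors. -/
def TFcol (G : SimpleGraph β) (s : Finset β) (k : ℕ) : Prop :=
  ∃ c : β → Fin k, ∀ x y z, x ∈ s → y ∈ s → z ∈ s →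
    c x = c y → c x = c z → G.Adj x y → G.Adj x z → G.Adj y z → False

/-- The triangle-free chromatic number of the subgraph induced on `s`. -/
noncomputable def tfc (G : SimpleGraph β) (s : Finset β) : ℕ := sInf {k | TFcol G s k}

lemma TFcol.anti {G : SimpleGraph β} {s t : Finset β} (hst : s ⊆ t) {k : ℕ}
    (h : TFcol G t k) : TFcol G s k := by
  obtain ⟨c, hc⟩ := h
  exact ⟨c, fun x y z hx hy hz => hc x y z (hst hx) (hst hy) (hst hz)⟩

lemma tfcol_card [Fintype β] (G : SimpleGraph β) (s : Finset β) :
    TFcol G s (Fintype.card β) := by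
  refine ⟨Fintype.equivFin β, fun x y z _ _ _ e1 _ axy _ _ => ?_⟩
  exact G.irrefl (((Fintype.equivFin β).injective e1) ▸ axy)

lemma tfc_le_of {G : SimpleGraph β} {s : Finset β} {k : ℕ} (h : TFcol G s k) :
    tfc G s ≤ k := Nat.sInf_le h

lemma tfcol_tfc [Fintype β] (G : SimpleGraph β) (s : Finset β) :
    TFcol G s (tfc G s) := by
  have hne : {k | TFcol G s k}.Nonempty := ⟨Fintype.card β, tfcol_card G s⟩
  exact Nat.sInf_mem hne

lemma tfc_mono [Fintype β] {G : SimpleGraph β} {s t : Finset β} (hst : s ⊆ t) :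
    tfc G s ≤ tfc G t := tfc_le_of ((tfcol_tfc G t).anti hst)

lemma TFcol.mono_k {G : SimpleGraph β} {s : Finset β} {k m : ℕ} (h : TFcol G s k)
    (hkm : k ≤ m) : TFcol G s m := by
  obtain ⟨c, hc⟩ := h
  refine ⟨fun v => Fin.castLE hkm (c v), fun x y z hx hy hz e1 e2 => ?_⟩
  exact hc x y z hx hy hz (by simpa [Fin.ext_iff] using e1) (by simpa [Fin.ext_iff] using e2)

lemma tfc_pos [Fintype β] [Nonempty β] (G : SimpleGraph β) (s : Finset β) :
    1 ≤ tfc G s := by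
  by_contra h
  push_neg at h
  have h0 : TFcol G s 0 := by
    have := tfcol_tfc G s
    rwa [Nat.lt_one_iff.mp h] at this
  obtain ⟨c, -⟩ := h0
  exact (c (Classical.arbitrary β)).elim0

lemma tfcol_empty (G : SimpleGraph β) : TFcol G ∅ 1 :=
  ⟨fun _ => 0, fun x _ _ hx _ _ _ _ _ _ _ => by simp at hx⟩

/-- Insertion lemma: a vertex of small degree can reuse one of the `m` colors. -/
lemma tfcol_insert [DecidableEq β] {G : SimpleGraph β} [DecidableRel G.Adj]
    {s : Finset β} {v : β} {m : ℕ} (hm : 1 ≤ m)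
    (h : TFcol G (s.erase v) m)
    (hdeg : ((s.erase v).filter (fun x => G.Adj v x)).card ≤ 2 * m - 1) :
    TFcol G s m := by
  classical
  obtain ⟨c, hc⟩ := h
  set N := (s.erase v).filter (fun x => G.Adj v x) with hN
  set B : Finset (Fin m) := Finset.univ.filter
      (fun i => ∃ x ∈ N, ∃ y ∈ N, c x = i ∧ c y = i ∧ G.Adj x y) with hB
  have hcard : 2 * B.card ≤ N.card := by
    have h1 : N.card = ∑ i : Fin m, (N.filter (fun x => c x = i)).card :=
      Finset.card_eq_sum_card_fiberwise (fun x _ => Finset.mem_univ (c x))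
    have h2 : ∀ i ∈ B, 2 ≤ (N.filter (fun x => c x = i)).card := by
      intro i hi
      simp only [hB, Finset.mem_filter] at hi
      obtain ⟨-, x, hx, y, hy, hcx, hcy, hxy⟩ := hi
      exact Finset.one_lt_card.mpr
        ⟨x, by simp [Finset.mem_filter, hx, hcx], y, by simp [Finset.mem_filter, hy, hcy],
          G.ne_of_adj hxy⟩
    calc 2 * B.card = ∑ _i ∈ B, 2 := by simp [mul_comm]
    _ ≤ ∑ i ∈ B, (N.filter (fun x => c x = i)).card := Finset.sum_le_sum h2
    _ ≤ ∑ i : Fin m, (N.filter (fun x => c x = i)).card :=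
        Finset.sum_le_sum_of_subset (Finset.subset_univ B)
    _ = N.card := h1.symm
  have hex : ∃ i : Fin m, i ∉ B := by
    by_contra hall
    push_neg at hall
    have hsub : (Finset.univ : Finset (Fin m)) ⊆ B := fun i _ => hall i
    have := Finset.card_le_card hsub
    simp only [Finset.card_univ, Fintype.card_fin] at this
    omega
  obtain ⟨i₀, hi₀⟩ := hex
  have hBmem : ∀ x y, x ∈ N → y ∈ N → G.Adj x y → c x = i₀ → c y = i₀ → False := by
    intro x y hx hy hxy hcx hcy
    exact hi₀ (by
      simp only [hB, Finset.mem_filter]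
      exact ⟨Finset.mem_univ _, x, hx, y, hy, hcx, hcy, hxy⟩)
  refine ⟨Function.update c v i₀, ?_⟩
  intro x y z hx hy hz e1 e2 axy axz ayz
  have hup : ∀ w, w ≠ v → Function.update c v i₀ w = c w :=
    fun w hw => Function.update_of_ne hw _ _
  have hmemN : ∀ w, w ∈ s → w ≠ v → G.Adj v w → w ∈ N := by
    intro w hws hwv hvw
    simp only [hN, Finset.mem_filter, Finset.mem_erase]
    exact ⟨⟨hwv, hws⟩, hvw⟩
  by_cases hxv : x = v
  · subst hxv
    have hyv : y ≠ x := (G.ne_of_adj axy).symm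
    have hzv : z ≠ x := (G.ne_of_adj axz).symm
    have hyN : y ∈ N := hmemN y hy hyv axy
    have hzN : z ∈ N := hmemN z hz hzv axz
    have hcy : c y = i₀ := by rw [← hup y hyv, ← e1, Function.update_self]
    have hcz : c z = i₀ := by rw [← hup z hzv, ← e2, Function.update_self]
    exact hBmem y z hyN hzN ayz hcy hcz
  · by_cases hyv : y = v
    · subst hyv
      have hzv : z ≠ y := (G.ne_of_adj ayz).symm
      have hxN : x ∈ N := hmemN x hx hxv axy.symm
      have hzN : z ∈ N := hmemN z hz hzv ayz
      have hcx : c x = i₀ := by rw [← hup x hxv, e1, Function.update_self]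
      have hcz : c z = i₀ := by rw [← hup z hzv, ← e2, hup x hxv, hcx]
      exact hBmem x z hxN hzN axz hcx hcz
    · by_cases hzv : z = v
      · subst hzv
        have hxN : x ∈ N := hmemN x hx hxv axz.symm
        have hyN : y ∈ N := hmemN y hy hyv ayz.symm
        have hcx : c x = i₀ := by rw [← hup x hxv, e2, Function.update_self]
        have hcy : c y = i₀ := by rw [← hup y hyv, ← e1, hup x hxv, hcx]
        exact hBmem x y hxN hyN axy hcx hcy
      · have mx : x ∈ s.erase v := Finset.mem_erase.mpr ⟨hxv, hx⟩
        have my : y ∈ s.erase v := Finset.mem_erase.mpr ⟨hyv, hy⟩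
        have mz : z ∈ s.erase v := Finset.mem_erase.mpr ⟨hzv, hz⟩
        exact hc x y z mx my mz (by rw [← hup x hxv, ← hup y hyv]; exact e1)
          (by rw [← hup x hxv, ← hup z hzv]; exact e2) axy axz ayz

/-- A minimal set achieving the triangle-free chromatic number; it is vertex-critical. -/
lemma exists_min [Fintype β] [DecidableEq β] (G : SimpleGraph β) :
    ∃ s : Finset β, tfc G s = tfc G Finset.univ ∧
      ∀ v ∈ s, tfc G (s.erase v) < tfc G s := by
  classical
  obtain ⟨s, hsc, hsa⟩ :=
    Nat.sInf_mem (⟨(Finset.univ : Finset β).card, Finset.univ, rfl, rfl⟩ :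
      {m | ∃ s : Finset β, s.card = m ∧ tfc G s = tfc G Finset.univ}.Nonempty)
  refine ⟨s, hsa, fun v hv => ?_⟩
  have hle : tfc G (s.erase v) ≤ tfc G s := tfc_mono (Finset.erase_subset _ _)
  rcases lt_or_eq_of_le hle with h | h
  · exact h
  · exfalso
    have hmem : sInf {m | ∃ s : Finset β, s.card = m ∧ tfc G s = tfc G Finset.univ}
        ≤ (s.erase v).card := Nat.sInf_le ⟨s.erase v, rfl, h.trans hsa⟩
    have hc : (s.erase v).card = s.card - 1 := Finset.card_erase_of_mem hv
    have hvpos : 0 < s.card := Finset.card_pos.mpr ⟨v, hv⟩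
    omega

/-- In a vertex-critical set, each vertex has degree at least `2k - 2`. -/
lemma min_deg [Fintype β] [DecidableEq β] {G : SimpleGraph β} [DecidableRel G.Adj]
    {s : Finset β} (hcrit : ∀ v ∈ s, tfc G (s.erase v) < tfc G s)
    (ha : 2 ≤ tfc G s) :
    ∀ v ∈ s, 2 * tfc G s - 2 ≤ ((s.erase v).filter (fun x => G.Adj v x)).card := by
  intro v hv
  by_contra hlt
  push_neg at hlt
  have h1 : TFcol G (s.erase v) (tfc G s - 1) :=
    (tfcol_tfc G (s.erase v)).mono_k (by have := hcrit v hv; omega)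
  have h2 : TFcol G s (tfc G s - 1) := tfcol_insert (by omega) h1 (by omega)
  have := tfc_le_of h2
  omega

/-- Pairing up the vertices gives a triangle-free coloring with `⌈n/2⌉` colors. -/
lemma tfcol_half [Fintype β] (G : SimpleGraph β) :
    TFcol G Finset.univ ((Fintype.card β + 1) / 2) := by
  refine ⟨fun v => ⟨(Fintype.equivFin β v : ℕ) / 2, by
    have := ((Fintype.equivFin β) v).2; omega⟩, ?_⟩
  intro x y z _ _ _ e1 e2 axy axz ayz
  have i1 : ((Fintype.equivFin β) x : ℕ) ≠ ((Fintype.equivFin β) y : ℕ) :=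
    fun h => G.ne_of_adj axy ((Fintype.equivFin β).injective (Fin.val_injective h))
  have i2 : ((Fintype.equivFin β) x : ℕ) ≠ ((Fintype.equivFin β) z : ℕ) :=
    fun h => G.ne_of_adj axz ((Fintype.equivFin β).injective (Fin.val_injective h))
  have i3 : ((Fintype.equivFin β) y : ℕ) ≠ ((Fintype.equivFin β) z : ℕ) :=
    fun h => G.ne_of_adj ayz ((Fintype.equivFin β).injective (Fin.val_injective h))
  have d1 : ((Fintype.equivFin β) x : ℕ) / 2 = ((Fintype.equivFin β) y : ℕ) / 2 := by
    simpa [Fin.ext_iff] using e1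
  have d2 : ((Fintype.equivFin β) x : ℕ) / 2 = ((Fintype.equivFin β) z : ℕ) / 2 := by
    simpa [Fin.ext_iff] using e2
  omega

/-- The `K₃`-free chromatic number equals `tfc` on the full vertex set. -/
lemma gChrom_eq [Fintype β] (H : SimpleGraph β) :
    gChrom (completeGraph (Fin 3)) H = tfc H Finset.univ := by
  unfold gChrom tfc
  congr 1
  ext k
  simp only [Set.mem_setOf_eq]
  constructor
  · rintro ⟨c, hc⟩
    refine ⟨c, fun x y z _ _ _ e1 e2 axy axz ayz => ?_⟩
    exact (gfree_iff H {v | c v = c x}).1 (hc (c x)) x y z rfl e1.symm e2.symm axy axz ayz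
  · rintro ⟨c, hc⟩
    refine ⟨c, fun i => (gfree_iff H _).2 ?_⟩
    intro x y z hx hy hz axy axz ayz
    exact hc x y z (Finset.mem_univ _) (Finset.mem_univ _) (Finset.mem_univ _)
      (hx.trans hy.symm) (hx.trans hz.symm) axy axz ayz

end AuxTF

theorem stmt16 {β : Type*} [Fintype β] (H : SimpleGraph β) (n : ℕ)
    (hn : Fintype.card β = n) :
    gChrom (completeGraph (Fin 3)) H + gChrom (completeGraph (Fin 3)) Hᶜ ≤
      ⌈((n : ℚ) / 2)⌉₊ + 1 := by
  classical
  have hceil : n ≤ 2 * ⌈((n : ℚ) / 2)⌉₊ := by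
    have h1 := Nat.le_ceil ((n : ℚ) / 2)
    have h2 : (n : ℚ) ≤ 2 * (⌈((n : ℚ) / 2)⌉₊ : ℚ) := by linarith
    exact_mod_cast h2
  rw [gChrom_eq H, gChrom_eq Hᶜ]
  rcases Nat.eq_zero_or_pos n with h0 | hpos
  · have hemp : IsEmpty β := Fintype.card_eq_zero_iff.mp (by omega)
    have ha : tfc H Finset.univ ≤ 0 :=
      tfc_le_of ⟨fun v => isEmptyElim v, fun x => isEmptyElim x⟩
    have hb : tfc Hᶜ Finset.univ ≤ 0 :=
      tfc_le_of ⟨fun v => isEmptyElim v, fun x => isEmptyElim x⟩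
    omega
  · have hne : Nonempty β := Fintype.card_pos_iff.mp (by omega)
    set a := tfc H Finset.univ with hadef
    set b := tfc Hᶜ Finset.univ with hbdef
    have ha1 : 1 ≤ a := tfc_pos H _
    have hb1 : 1 ≤ b := tfc_pos Hᶜ _
    have hhalfH : a ≤ (n + 1) / 2 := by
      have := tfc_le_of (tfcol_half H); rwa [hn] at this
    have hhalfHc : b ≤ (n + 1) / 2 := by
      have := tfc_le_of (tfcol_half Hᶜ); rwa [hn] at this
    by_cases ha2 : a = 1
    · omega
    by_cases hb2 : b = 1
    · omega
    have ha2' : 2 ≤ a := by omega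
    have hb2' : 2 ≤ b := by omega
    obtain ⟨s, hsa, hscrit⟩ := exists_min H
    obtain ⟨t, htb, htcrit⟩ := exists_min Hᶜ
    have hsa' : tfc H s = a := hsa
    have htb' : tfc Hᶜ t = b := htb
    by_cases hint : ∃ v, v ∈ s ∧ v ∈ t
    · obtain ⟨v, hvs, hvt⟩ := hint
      have d1 := min_deg hscrit (by rw [hsa']; exact ha2') v hvs
      have d2 := min_deg htcrit (by rw [htb']; exact hb2') v hvt
      rw [hsa'] at d1
      rw [htb'] at d2
      set N1 := (s.erase v).filter (fun x => H.Adj v x) with hN1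
      set N2 := (t.erase v).filter (fun x => Hᶜ.Adj v x) with hN2
      have hdisj : Disjoint N1 N2 := by
        rw [Finset.disjoint_left]
        intro x h1 h2
        simp only [hN1, hN2, Finset.mem_filter, compl_adj] at h1 h2
        exact h2.2.2 h1.2
      have hsub : N1 ∪ N2 ⊆ Finset.univ.erase v := by
        intro x hx
        rcases Finset.mem_union.mp hx with h | h
        · simp only [hN1, Finset.mem_filter, Finset.mem_erase] at h
          exact Finset.mem_erase.mpr ⟨h.1.1, Finset.mem_univ _⟩
        · simp only [hN2, Finset.mem_filter, Finset.mem_erase] at h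
          exact Finset.mem_erase.mpr ⟨h.1.1, Finset.mem_univ _⟩
      have hcards : N1.card + N2.card ≤ n - 1 := by
        rw [← Finset.card_union_of_disjoint hdisj]
        have h3 := Finset.card_le_card hsub
        rwa [Finset.card_erase_of_mem (Finset.mem_univ v), Finset.card_univ, hn] at h3
      omega
    · push_neg at hint
      have hdisj : Disjoint s t := Finset.disjoint_left.mpr hint
      have hs_ne : s.Nonempty := by
        rcases Finset.eq_empty_or_nonempty s with h | h
        · exfalso
          have : tfc H s ≤ 1 := tfc_le_of (h ▸ tfcol_empty H)
          omega
        · exact h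
      have ht_ne : t.Nonempty := by
        rcases Finset.eq_empty_or_nonempty t with h | h
        · exfalso
          have : tfc Hᶜ t ≤ 1 := tfc_le_of (h ▸ tfcol_empty Hᶜ)
          omega
        · exact h
      obtain ⟨u, hu⟩ := hs_ne
      obtain ⟨w, hw⟩ := ht_ne
      have d1 := min_deg hscrit (by rw [hsa']; exact ha2') u hu
      have d2 := min_deg htcrit (by rw [htb']; exact hb2') w hw
      rw [hsa'] at d1
      rw [htb'] at d2
      have hs_card : 2 * a - 1 ≤ s.card := by
        have hsub : (s.erase u).filter (fun x => H.Adj u x) ⊆ s.erase u :=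
          Finset.filter_subset _ _
        have h3 := Finset.card_le_card hsub
        have h4 : (s.erase u).card = s.card - 1 := Finset.card_erase_of_mem hu
        have h5 : 0 < s.card := Finset.card_pos.mpr ⟨u, hu⟩
        omega
      have ht_card : 2 * b - 1 ≤ t.card := by
        have hsub : (t.erase w).filter (fun x => Hᶜ.Adj w x) ⊆ t.erase w :=
          Finset.filter_subset _ _
        have h3 := Finset.card_le_card hsub
        have h4 : (t.erase w).card = t.card - 1 := Finset.card_erase_of_mem hw
        have h5 : 0 < t.card := Finset.card_pos.mpr ⟨w, hw⟩
        omega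
      have hsum : s.card + t.card ≤ n := by
        rw [← Finset.card_union_of_disjoint hdisj]
        have := Finset.card_le_card (Finset.subset_univ (s ∪ t))
        rwa [Finset.card_univ, hn] at this
      omega
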